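/- Suppose the Fourier transform Q̂(ξ) of Q ∈ L^2(ℝ^3) satisfies the bound ‖ |ξ|^n Q̂ ‖_{L^∞} ≤ (C n)^n for all n ≥ 1 and some constant C > 0, and Q̂ ∈ L^1. Then Q is real-analytic on ℝ^3. -/

import Mathlib

open MeasureTheory Real Complex
open scoped FourierTransform ENNReal RealInnerProductSpace

notation "E3" => EuclideanSpace ℝ (Fin 3)

lemma aux_summable (C x : ℝ) (hC : 0 < C) (hx : 0 ≤ x)
    (h : 10 * Real.exp 1 * C * x ≤ 1) :
    Summable (fun n : ℕ => x ^ n * (C * ((n : ℝ) + 4)) ^ (n + 4) / (n.factorial : ℝ)) := by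
  apply summable_of_ratio_norm_eventually_le (r := 1/2) (by norm_num)
  filter_upwards with n
  have e4 : (0:ℝ) < (n:ℝ) + 4 := by positivity
  have key : ((n:ℝ) + 5) ^ (n + 4) ≤ Real.exp 1 * ((n:ℝ) + 4) ^ (n + 4) := by
    have h1 : (n:ℝ) + 5 ≤ ((n:ℝ) + 4) * Real.exp (((n:ℝ)+4)⁻¹) := by
      have := Real.add_one_le_exp (((n:ℝ)+4)⁻¹)
      calc (n:ℝ) + 5 = ((n:ℝ)+4) * (((n:ℝ)+4)⁻¹ + 1) := by field_simp; ring
        _ ≤ ((n:ℝ)+4) * Real.exp (((n:ℝ)+4)⁻¹) := by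
            apply mul_le_mul_of_nonneg_left _ e4.le; linarith
    calc ((n:ℝ) + 5) ^ (n + 4) ≤ (((n:ℝ)+4) * Real.exp (((n:ℝ)+4)⁻¹)) ^ (n+4) := by
          apply pow_le_pow_left₀ (by positivity) h1
      _ = ((n:ℝ)+4) ^ (n+4) * Real.exp (((n:ℝ)+4)⁻¹) ^ (n+4) := by rw [mul_pow]
      _ = ((n:ℝ)+4) ^ (n+4) * Real.exp (((n+4 : ℕ):ℝ) * ((n:ℝ)+4)⁻¹) := by
          rw [Real.exp_nat_mul]
      _ = Real.exp 1 * ((n:ℝ)+4) ^ (n+4) := by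
          rw [mul_comm]; congr 2
          push_cast
          field_simp
  have hP : (0:ℝ) < (C*((n:ℝ)+4))^(n+4) := by positivity
  have hQP : (C*((n:ℝ)+5))^(n+1+4) ≤ C * Real.exp 1 * (((n:ℝ)+5) * (C*((n:ℝ)+4))^(n+4)) := by
    have expand : (C*((n:ℝ)+5))^(n+1+4) = C^(n+4) * C * (((n:ℝ)+5)^(n+4) * ((n:ℝ)+5)) := by
      show (C*((n:ℝ)+5))^(n+4+1) = _
      rw [pow_succ, mul_pow]; ring
    rw [expand, mul_pow]
    calc C^(n+4) * C * (((n:ℝ)+5)^(n+4) * ((n:ℝ)+5))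
        ≤ C^(n+4) * C * ((Real.exp 1 * ((n:ℝ)+4)^(n+4)) * ((n:ℝ)+5)) := by
          gcongr
      _ = C * Real.exp 1 * (((n:ℝ)+5) * (C^(n+4) * ((n:ℝ)+4)^(n+4))) := by ring
  have hx5 : x * C * Real.exp 1 * ((n:ℝ)+5) ≤ 1/2 * ((n:ℝ)+1) := by
    have h5 : (n:ℝ) + 5 ≤ 5 * ((n:ℝ)+1) := by
      have : (0:ℝ) ≤ (n:ℝ) := Nat.cast_nonneg n
      linarith
    have hxce : (0:ℝ) ≤ x * C * Real.exp 1 := by positivity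
    have s1 : x*C*Real.exp 1 * ((n:ℝ)+5) ≤ x*C*Real.exp 1 * (5*((n:ℝ)+1)) :=
      mul_le_mul_of_nonneg_left h5 hxce
    have s2 : x*C*Real.exp 1 * 5 ≤ 1/2 := by nlinarith [Real.exp_pos 1]
    have hn1 : (0:ℝ) ≤ (n:ℝ)+1 := by positivity
    nlinarith [mul_le_mul_of_nonneg_right s2 hn1]
  have main : x * (C*((n:ℝ)+5))^(n+1+4) ≤ 1/2 * (((n:ℝ)+1) * (C*((n:ℝ)+4))^(n+4)) := by
    calc x * (C*((n:ℝ)+5))^(n+1+4)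
        ≤ x * (C * Real.exp 1 * (((n:ℝ)+5) * (C*((n:ℝ)+4))^(n+4))) := by
          apply mul_le_mul_of_nonneg_left hQP hx
      _ = (x*C*Real.exp 1*((n:ℝ)+5)) * (C*((n:ℝ)+4))^(n+4) := by ring
      _ ≤ (1/2 * ((n:ℝ)+1)) * (C*((n:ℝ)+4))^(n+4) := mul_le_mul_of_nonneg_right hx5 hP.le
      _ = 1/2 * (((n:ℝ)+1)*(C*((n:ℝ)+4))^(n+4)) := by ring
  have hd : (0:ℝ) < (n.factorial : ℝ) := by exact_mod_cast n.factorial_pos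
  have hfs : (((n+1).factorial : ℕ) : ℝ) = ((n:ℝ)+1) * (n.factorial : ℝ) := by
    rw [Nat.factorial_succ]; push_cast; ring
  have hcast : ((n:ℝ)+1) + 4 = (n:ℝ) + 5 := by ring
  rw [Real.norm_of_nonneg (by positivity), Real.norm_of_nonneg (by positivity)]
  push_cast [hfs]
  rw [hcast, div_le_iff₀ (by positivity)]
  have hsimp : 1/2 * (x^n * (C*((n:ℝ)+4))^(n+4) / (n.factorial:ℝ)) * (((n:ℝ)+1) * (n.factorial:ℝ))
      = 1/2 * (x^n * ((((n:ℝ)+1)) * (C*((n:ℝ)+4))^(n+4))) := by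
    field_simp
  rw [hsimp, pow_succ]
  calc x^n * x * (C*((n:ℝ)+5))^(n+1+4) = x^n * (x * (C*((n:ℝ)+5))^(n+1+4)) := by ring
    _ ≤ x^n * (1/2 * (((n:ℝ)+1) * (C*((n:ℝ)+4))^(n+4))) :=
        mul_le_mul_of_nonneg_left main (pow_nonneg hx n)
    _ = 1/2 * (x^n * (((n:ℝ)+1) * (C*((n:ℝ)+4))^(n+4))) := by ring

set_option maxHeartbeats 2000000 in
/-- Sub-factorial growth of `|ξ|ⁿ Q̂` in L^∞, together with `Q̂ ∈ L¹`, forces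
`Q = 𝓕⁻ Q̂` to be real-analytic on all of ℝ³. -/
theorem analytic_of_fourier_bounds
    (Q Qhat : EuclideanSpace ℝ (Fin 3) → ℂ) (C : ℝ) (hC : 0 < C)
    (hQ2 : MemLp Q 2 volume)
    (hQhat1 : Integrable Qhat)
    (hQdef : ∀ x, Q x = 𝓕⁻ Qhat x)
    (hbound : ∀ n : ℕ, 1 ≤ n →
      eLpNorm (fun ξ : EuclideanSpace ℝ (Fin 3) => ‖ξ‖ ^ n * Qhat ξ) ⊤ volume
        ≤ ENNReal.ofReal ((C * n) ^ n)) :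
    AnalyticOnNhd ℝ Q Set.univ := by
  -- a.e. pointwise bound
  have hae : ∀ᵐ ξ : E3, ∀ n : ℕ, 1 ≤ n → ‖ξ‖^n * ‖Qhat ξ‖ ≤ (C*n)^n := by
    rw [MeasureTheory.ae_all_iff]
    intro n
    by_cases hn : 1 ≤ n
    · have h := hbound n hn
      rw [eLpNorm_exponent_top, eLpNormEssSup] at h
      have h2 := ENNReal.ae_le_essSup (μ := (volume : Measure E3)) (fun ξ : E3 => (‖(‖ξ‖ ^ n : ℂ) * Qhat ξ‖₊ : ENNReal))
      filter_upwards [h2] with ξ hξ _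
      have h3 : (‖(‖ξ‖ ^ n : ℂ) * Qhat ξ‖₊ : ENNReal) ≤ ENNReal.ofReal ((C*n)^n) := le_trans hξ h
      have h4 : ‖(‖ξ‖ ^ n : ℂ) * Qhat ξ‖ = ‖ξ‖^n * ‖Qhat ξ‖ := by
        rw [norm_mul]
        norm_num
      have h5 : (0:ℝ) ≤ (C*n)^n := by positivity
      rw [← h4, ← ENNReal.ofReal_le_ofReal_iff h5, ofReal_norm]
      exact h3
    · filter_upwards with ξ hn'
      omega
  -- integrable weight
  have hg4 : Integrable (fun ξ : E3 => ((1 + ‖ξ‖) ^ (4:ℕ))⁻¹) := by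
    have h34 : ((Module.finrank ℝ E3 : ℝ)) < 4 := by
      norm_num [finrank_euclideanSpace]
    have := integrable_one_add_norm (E := E3) (μ := volume) (r := 4) h34
    apply this.congr
    filter_upwards with ξ
    rw [Real.rpow_neg (by positivity), ← Real.rpow_natCast (1 + ‖ξ‖) 4]
    norm_num
  -- pointwise domination
  have hdom : ∀ n : ℕ, ∀ᵐ ξ : E3, ‖ξ‖^n * ‖Qhat ξ‖ ≤
      ‖Qhat ξ‖ + (16 * (C*((n:ℝ)+4))^(n+4)) * ((1 + ‖ξ‖) ^ (4:ℕ))⁻¹ := by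
    intro n
    filter_upwards [hae] with ξ hξ
    rcases le_or_gt ‖ξ‖ 1 with h1 | h1
    · have : ‖ξ‖^n ≤ 1 := pow_le_one₀ (norm_nonneg _) h1
      have h2 : ‖ξ‖^n * ‖Qhat ξ‖ ≤ ‖Qhat ξ‖ := by
        nlinarith [norm_nonneg (Qhat ξ)]
      have h3 : (0:ℝ) ≤ (16 * (C*((n:ℝ)+4))^(n+4)) * ((1 + ‖ξ‖) ^ (4:ℕ))⁻¹ := by positivity
      linarith
    · have hb := hξ (n+4) (by omega)
      have hnorm : (0:ℝ) < ‖ξ‖ := by linarith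
      have h2 : (1 + ‖ξ‖)^(4:ℕ) ≤ 16 * ‖ξ‖^(4:ℕ) := by
        calc (1 + ‖ξ‖)^(4:ℕ) ≤ (2*‖ξ‖)^(4:ℕ) := by
              apply pow_le_pow_left₀ (by positivity); linarith
          _ = 16 * ‖ξ‖^(4:ℕ) := by ring
      have key : ‖ξ‖^n * ‖Qhat ξ‖ * (1 + ‖ξ‖)^(4:ℕ) ≤ 16 * (C*((n:ℝ)+4))^(n+4) := by
        calc ‖ξ‖^n * ‖Qhat ξ‖ * (1 + ‖ξ‖)^(4:ℕ)
            ≤ ‖ξ‖^n * ‖Qhat ξ‖ * (16 * ‖ξ‖^(4:ℕ)) := by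
              apply mul_le_mul_of_nonneg_left h2 (by positivity)
          _ = 16 * (‖ξ‖^(n+4) * ‖Qhat ξ‖) := by rw [pow_add]; ring
          _ ≤ 16 * (C*((n:ℝ)+4))^(n+4) := by
              have := hb
              push_cast at this ⊢
              nlinarith
      have h4 : (0:ℝ) < (1 + ‖ξ‖)^(4:ℕ) := by positivity
      have h5 : ‖ξ‖^n * ‖Qhat ξ‖ ≤ (16 * (C*((n:ℝ)+4))^(n+4)) * ((1 + ‖ξ‖) ^ (4:ℕ))⁻¹ := by
        rw [← div_eq_mul_inv, le_div_iff₀ h4]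
        exact key
      have h6 : (0:ℝ) ≤ ‖Qhat ξ‖ := norm_nonneg _
      linarith
  -- integrability of moments
  have hint : ∀ n : ℕ, Integrable (fun ξ : E3 => ‖ξ‖^n * ‖Qhat ξ‖) := by
    intro n
    apply Integrable.mono' (hQhat1.norm.add ((hg4.const_mul (16 * (C*((n:ℝ)+4))^(n+4)))))
    · exact ((continuous_norm.pow n).aestronglyMeasurable.mul hQhat1.norm.aestronglyMeasurable)
    · filter_upwards [hdom n] with ξ hξ
      rw [Real.norm_of_nonneg (by positivity)]
      exact hξ
  -- integral bound
  set A := ∫ ξ : E3, ‖Qhat ξ‖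
  set B := ∫ ξ : E3, ((1 + ‖ξ‖) ^ (4:ℕ))⁻¹
  have hB : 0 ≤ B := integral_nonneg (fun ξ => by positivity)
  have Ibound : ∀ n : ℕ, (∫ ξ : E3, ‖ξ‖^n * ‖Qhat ξ‖) ≤
      A + 16 * (C*((n:ℝ)+4))^(n+4) * B := by
    intro n
    have hgint : Integrable (fun ξ : E3 => ‖Qhat ξ‖ +
        16 * (C*((n:ℝ)+4))^(n+4) * ((1 + ‖ξ‖) ^ (4:ℕ))⁻¹) :=
      hQhat1.norm.add (hg4.const_mul _)
    have h := integral_mono_ae (hint n) hgint (hdom n)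
    rwa [integral_add hQhat1.norm (hg4.const_mul _), integral_const_mul] at h
  have hA : 0 ≤ A := integral_nonneg (fun ξ => norm_nonneg _)
  have hFT : ∀ w : E3, AnalyticAt ℝ (𝓕 Qhat) w := by
    intro w
    set r0 : ℝ := (20 * π * Real.exp 1 * C)⁻¹ with hr0def
    have hπ := Real.pi_pos
    have hr0 : 0 < r0 := by positivity
    -- summability of the dominating series
    have hsum : ∀ t : ℝ, 0 ≤ t → t ≤ r0 →
        Summable (fun n : ℕ => (2*π*t)^n / (n.factorial : ℝ) * (A + 16 * (C*((n:ℝ)+4))^(n+4) * B)) := by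
      intro t ht htr
      have hcond : 10 * Real.exp 1 * C * (2*π*t) ≤ 1 := by
        have h1 : (20 * π * Real.exp 1 * C) * t ≤ (20 * π * Real.exp 1 * C) * r0 :=
          mul_le_mul_of_nonneg_left htr (by positivity)
        have h2 : (20 * π * Real.exp 1 * C) * r0 = 1 := by
          rw [hr0def]; field_simp
        nlinarith
      have s1 : Summable (fun n : ℕ => (2*π*t)^n / (n.factorial : ℝ) * A) :=
        (Real.summable_pow_div_factorial (2*π*t)).mul_right A
      have s2 : Summable (fun n : ℕ =>
          (16*B) * ((2*π*t)^n * (C*((n:ℝ)+4))^(n+4) / (n.factorial : ℝ))) :=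
        (aux_summable C (2*π*t) hC (by positivity) hcond).mul_left (16*B)
      apply (s1.add s2).congr
      intro n
      field_simp
    set In : ℕ → ℝ := fun n => ∫ ξ : E3, ‖ξ‖^n * ‖Qhat ξ‖ with hIn
    have hInnonneg : ∀ n, 0 ≤ In n := fun n => integral_nonneg (fun ξ => by positivity)
    have hInle : ∀ n, In n ≤ A + 16 * (C*((n:ℝ)+4))^(n+4) * B := Ibound
    -- integrability of the multilinear integrands
    have hFint : ∀ n : ℕ, Integrable
        (fun v => VectorFourier.fourierPowSMulRight (innerSL ℝ) Qhat v n) :=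
      fun n => VectorFourier.integrable_fourierPowSMulRight (innerSL ℝ) (hint n) hQhat1.1
    -- the candidate power series
    set p : FormalMultilinearSeries ℝ E3 ℂ := fun n => (n.factorial : ℝ)⁻¹ •
      (𝓕 (fun v => VectorFourier.fourierPowSMulRight (innerSL ℝ) Qhat v n) w) with hp
    -- norm bound on p n
    have hpnorm : ∀ n : ℕ, ‖p n‖ ≤ (2*π)^n / (n.factorial : ℝ) * In n := by
      intro n
      have h1 : ‖p n‖ ≤ (n.factorial : ℝ)⁻¹ *
          ‖𝓕 (fun v => VectorFourier.fourierPowSMulRight (innerSL ℝ) Qhat v n) w‖ := by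
        have h := norm_smul_le ((n.factorial : ℝ)⁻¹)
          (𝓕 (fun v => VectorFourier.fourierPowSMulRight (innerSL ℝ) Qhat v n) w)
        rwa [Real.norm_of_nonneg (by positivity : (0:ℝ) ≤ (n.factorial : ℝ)⁻¹)] at h
      have h2 : ‖𝓕 (fun v => VectorFourier.fourierPowSMulRight (innerSL ℝ) Qhat v n) w‖ ≤
          ∫ v, ‖VectorFourier.fourierPowSMulRight (innerSL ℝ) Qhat v n‖ :=
        VectorFourier.norm_fourierIntegral_le_integral_norm 𝐞 volume (innerₗ E3) _ w
      have h3 : (∫ v, ‖VectorFourier.fourierPowSMulRight (innerSL ℝ) Qhat v n‖) ≤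
          (2*π)^n * In n := by
        rw [hIn, ← integral_const_mul]
        apply integral_mono ((hFint n).norm) (((hint n).const_mul ((2*π)^n)))
        intro v
        have h4 := VectorFourier.norm_fourierPowSMulRight_le (innerSL ℝ) Qhat v n
        have h5 : (2 * π * ‖innerSL ℝ (E := E3)‖) ^ n ≤ (2*π)^n := by
          apply pow_le_pow_left₀ (by positivity)
          have := norm_innerSL_le (𝕜 := ℝ) (E := E3)
          nlinarith
        calc ‖VectorFourier.fourierPowSMulRight (innerSL ℝ) Qhat v n‖
            ≤ (2 * π * ‖innerSL ℝ (E := E3)‖) ^ n * ‖v‖ ^ n * ‖Qhat v‖ := h4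
          _ ≤ (2*π)^n * ‖v‖^n * ‖Qhat v‖ := by
              apply mul_le_mul_of_nonneg_right _ (norm_nonneg _)
              apply mul_le_mul_of_nonneg_right h5 (by positivity)
          _ = (2*π)^n * (‖v‖^n * ‖Qhat v‖) := by ring
      calc ‖p n‖ ≤ (n.factorial : ℝ)⁻¹ * ‖𝓕 (fun v => VectorFourier.fourierPowSMulRight (innerSL ℝ) Qhat v n) w‖ := h1
        _ ≤ (n.factorial : ℝ)⁻¹ * ((2*π)^n * In n) := by
            apply mul_le_mul_of_nonneg_left (le_trans h2 h3) (by positivity)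
        _ = (2*π)^n / (n.factorial : ℝ) * In n := by ring
    -- the series bound, used for radius and for domination
    have hc : ∀ (t : ℝ), 0 ≤ t → ∀ n : ℕ, (2*π)^n / (n.factorial : ℝ) * In n * t^n ≤
        (2*π*t)^n / (n.factorial : ℝ) * (A + 16 * (C*((n:ℝ)+4))^(n+4) * B) := by
      intro t ht n
      have h6 : (2*π*t)^n = (2*π)^n * t^n := by rw [mul_pow]
      rw [h6]
      have := mul_le_mul_of_nonneg_left (hInle n) (by positivity : (0:ℝ) ≤ (2*π)^n / (n.factorial : ℝ) * t^n)
      ring_nf at this ⊢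
      linarith [this]
    -- radius bound
    have hrad : ENNReal.ofReal r0 ≤ p.radius := by
      have hco : ENNReal.ofReal r0 = (r0.toNNReal : ℝ≥0∞) := rfl
      rw [hco]
      apply p.le_radius_of_summable
      have hcoe : ((r0.toNNReal : ℝ)) = r0 := Real.coe_toNNReal _ hr0.le
      rw [show (fun n => ‖p n‖ * (r0.toNNReal : ℝ)^n) = fun n => ‖p n‖ * r0^n by
        funext n; rw [hcoe]]
      apply Summable.of_nonneg_of_le (fun n => by positivity) _ (hsum r0 hr0.le le_rfl)
      intro n
      calc ‖p n‖ * r0^n ≤ (2*π)^n / (n.factorial : ℝ) * In n * r0^n :=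
            mul_le_mul_of_nonneg_right (hpnorm n) (by positivity)
        _ ≤ _ := hc r0 hr0.le n
    refine ⟨p, ENNReal.ofReal r0, ⟨hrad, by simp [hr0], ?_⟩⟩
    intro y hy
    have hy' : ‖y‖ < r0 := by
      rw [mem_emetric_ball_zero_iff, ← ofReal_norm,
        ENNReal.ofReal_lt_ofReal_iff hr0] at hy
      exact hy
    set Fn' : ℕ → E3 → ℂ := fun n v => ((n.factorial : ℂ)⁻¹ *
        Complex.exp (↑(-2*π*⟪v,w⟫) * Complex.I) *
        (-(2*π*Complex.I) * (⟪v,y⟫ : ℝ))^n) * Qhat v with hFn'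
    have hφnorm : ∀ n v, ‖Fn' n v‖ ≤ (2*π*‖y‖)^n / (n.factorial:ℝ) * (‖v‖^n * ‖Qhat v‖) := by
      intro n v
      have h1 : ‖Fn' n v‖ = (n.factorial:ℝ)⁻¹ * (2*π*|⟪v,y⟫|)^n * ‖Qhat v‖ := by
        simp only [hFn', norm_mul, norm_pow, norm_inv,
          Complex.norm_exp_ofReal_mul_I, Complex.norm_natCast, map_mul, norm_neg,
          Complex.norm_real, Complex.norm_I, Complex.norm_ofNat, Real.norm_eq_abs]
        rw [_root_.abs_of_pos hπ]
        ring
      rw [h1]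
      have h2 : (2*π*|⟪v,y⟫|)^n ≤ (2*π*‖y‖)^n * ‖v‖^n := by
        have h3 : |⟪v,y⟫| ≤ ‖v‖ * ‖y‖ := abs_real_inner_le_norm v y
        calc (2*π*|⟪v,y⟫|)^n ≤ (2*π*(‖v‖*‖y‖))^n := by
              apply pow_le_pow_left₀ (by positivity)
              nlinarith
          _ = (2*π*‖y‖)^n * ‖v‖^n := by rw [← mul_pow]; ring_nf
      calc (n.factorial:ℝ)⁻¹ * (2*π*|⟪v,y⟫|)^n * ‖Qhat v‖
          ≤ (n.factorial:ℝ)⁻¹ * ((2*π*‖y‖)^n * ‖v‖^n) * ‖Qhat v‖ := by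
            apply mul_le_mul_of_nonneg_right _ (norm_nonneg _)
            apply mul_le_mul_of_nonneg_left h2 (by positivity)
        _ = (2*π*‖y‖)^n / (n.factorial:ℝ) * (‖v‖^n * ‖Qhat v‖) := by ring
    have hFn'int : ∀ n, Integrable (fun v => Fn' n v) := by
      intro n
      apply Integrable.mono' (((hint n).const_mul ((2*π*‖y‖)^n / (n.factorial:ℝ))))
      · apply AEStronglyMeasurable.mul _ hQhat1.1
        apply Continuous.aestronglyMeasurable
        have hinnerw : Continuous fun v : E3 => ⟪v,w⟫ := continuous_id.inner continuous_const
        have hinnery : Continuous fun v : E3 => ⟪v,y⟫ := continuous_id.inner continuous_const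
        apply Continuous.mul
        · apply Continuous.mul continuous_const
          exact Complex.continuous_exp.comp
            ((Complex.continuous_ofReal.comp (continuous_const.mul hinnerw)).mul continuous_const)
        · exact (continuous_const.mul (Complex.continuous_ofReal.comp hinnery)).pow n
      · filter_upwards with v
        exact hφnorm n v
    have hIntle : ∀ n, (∫ v, ‖Fn' n v‖) ≤ (2*π*‖y‖)^n / (n.factorial:ℝ) * In n := by
      intro n
      rw [hIn, ← integral_const_mul]
      exact integral_mono (hFn'int n).norm ((hint n).const_mul _) (fun v => hφnorm n v)
    have hsummable : Summable (fun n => ∫ v, ‖Fn' n v‖) := by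
      apply Summable.of_nonneg_of_le (fun n => integral_nonneg (fun v => norm_nonneg _)) _
        (hsum ‖y‖ (norm_nonneg y) hy'.le)
      intro n
      refine (hIntle n).trans ?_
      have heq : (2*π*‖y‖)^n / (n.factorial:ℝ) * In n
          = (2*π)^n / (n.factorial:ℝ) * In n * ‖y‖^n := by rw [mul_pow, mul_pow]; ring
      rw [heq]
      exact hc ‖y‖ (norm_nonneg y) n
    have hpt : ∀ v : E3, HasSum (fun n => Fn' n v)
        (Complex.exp (↑(-2*π*⟪v,w+y⟫) * Complex.I) * Qhat v) := by
      intro v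
      have h1 := ((NormedSpace.expSeries_div_hasSum_exp
        (-(2*π*Complex.I) * (⟪v,y⟫ : ℝ))).mul_right (Qhat v)).mul_left
        (Complex.exp (↑(-2*π*⟪v,w⟫) * Complex.I))
      have hfn : (fun n : ℕ => Complex.exp (↑(-2*π*⟪v,w⟫) * Complex.I) *
          ((-(2*π*Complex.I) * (⟪v,y⟫:ℝ))^n / (n.factorial:ℂ) * Qhat v)) = fun n => Fn' n v := by
        funext n
        simp only [hFn']
        have hne : ((n.factorial:ℂ)) ≠ 0 := by exact_mod_cast n.factorial_ne_zero
        field_simp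
      have hval : Complex.exp (↑(-2*π*⟪v,w⟫) * Complex.I) *
          (NormedSpace.exp (-(2*π*Complex.I) * (⟪v,y⟫:ℝ)) * Qhat v)
          = Complex.exp (↑(-2*π*⟪v,w+y⟫) * Complex.I) * Qhat v := by
        rw [← Complex.exp_eq_exp_ℂ, ← mul_assoc, ← Complex.exp_add]
        congr 2
        push_cast [inner_add_right]
        ring
      rw [hfn, hval] at h1
      exact h1
    have hmain := hasSum_integral_of_summable_integral_norm hFn'int hsummable
    have htsum : (∫ v, ∑' n, Fn' n v) = 𝓕 Qhat (w+y) := by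
      rw [Real.fourier_eq']
      apply integral_congr_ae
      filter_upwards with v
      rw [(hpt v).tsum_eq, smul_eq_mul]
    have hfun : (fun n => (p n) fun _ => y) = fun n => ∫ v, Fn' n v := by
      funext n
      have e1 : ((p n) fun _ => y) = (n.factorial:ℝ)⁻¹ •
          ((𝓕 (fun v => VectorFourier.fourierPowSMulRight (innerSL ℝ) Qhat v n) w) fun _ => y) := rfl
      rw [e1, Real.fourier_continuousMultilinearMap_apply (hFint n),
        Real.fourier_eq', ← integral_smul]
      apply integral_congr_ae
      filter_upwards with v
      simp only [VectorFourier.fourierPowSMulRight_apply, innerSL_apply_apply, Finset.prod_const,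
        Finset.card_univ, Fintype.card_fin, hFn', smul_eq_mul, Complex.real_smul]
      push_cast
      have hi : ((innerSL ℝ) v) y = inner ℝ v y := rfl
      rw [hi]
      ring
    rw [hfun, ← htsum]
    exact hmain

  intro x _
  have hneg : AnalyticAt ℝ (fun z : E3 => -z) x := analyticAt_id.neg
  have h1 : AnalyticAt ℝ (fun z : E3 => 𝓕 Qhat (-z)) x := (hFT (-x)).comp hneg
  apply h1.congr
  filter_upwards with z
  rw [hQdef z, Real.fourierInv_eq_fourier_neg]
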